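/- Let P₁, P₂, P₃ be elements of a complex Banach algebra with 𝓛 = P₁ + P₂ + P₃, and suppose the second-order condition [P₁,P₂] + [P₁,P₃] + [P₂,P₃] = 0 holds. Then exp(tP₁)·exp(tP₂)·exp(tP₃) − exp(t𝓛) − (t³/6)·([P₁,[P₂,P₃]] + [P₂,[P₂,P₃]]) = O(t⁴) as t → 0. -/

import Mathlib

open NormedSpace Asymptotics Filter
open scoped Topology Nat

/-- The commutator `[X,Y] = X·Y − Y·X` in an associative ring. -/
def ringComm {R : Type*} [Ring R] (X Y : R) : R := X * Y - Y * X

section Aux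

variable {𝒜 : Type*} [NormedRing 𝒜] [NormedAlgebra ℂ 𝒜] [CompleteSpace 𝒜]

/-- Cubic Taylor polynomial of `exp (t • X)`. -/
noncomputable def Qpoly (X : 𝒜) (t : ℂ) : 𝒜 :=
  1 + t • X + (t ^ 2 / 2) • (X * X) + (t ^ 3 / 6) • (X * (X * X))

/-- The degree ≥ 4 part of `Q(P₁) Q(P₂) Q(P₃)`, divided by `t⁴`. -/
noncomputable def Wpoly (P₁ P₂ P₃ : 𝒜) (t : ℂ) : 𝒜 :=
  ((1 : ℂ) / 6) • (P₂ * (P₃ * (P₃ * P₃))) +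
  ((1 : ℂ) / 4) • (P₂ * (P₂ * (P₃ * P₃))) +
  (t ^ 1 / 12) • (P₂ * (P₂ * (P₃ * (P₃ * P₃)))) +
  ((1 : ℂ) / 6) • (P₂ * (P₂ * (P₂ * P₃))) +
  (t ^ 1 / 12) • (P₂ * (P₂ * (P₂ * (P₃ * P₃)))) +
  (t ^ 2 / 36) • (P₂ * (P₂ * (P₂ * (P₃ * (P₃ * P₃))))) +
  ((1 : ℂ) / 6) • (P₁ * (P₃ * (P₃ * P₃))) +
  ((1 : ℂ) / 2) • (P₁ * (P₂ * (P₃ * P₃))) +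
  (t ^ 1 / 6) • (P₁ * (P₂ * (P₃ * (P₃ * P₃)))) +
  ((1 : ℂ) / 2) • (P₁ * (P₂ * (P₂ * P₃))) +
  (t ^ 1 / 4) • (P₁ * (P₂ * (P₂ * (P₃ * P₃)))) +
  (t ^ 2 / 12) • (P₁ * (P₂ * (P₂ * (P₃ * (P₃ * P₃))))) +
  ((1 : ℂ) / 6) • (P₁ * (P₂ * (P₂ * P₂))) +
  (t ^ 1 / 6) • (P₁ * (P₂ * (P₂ * (P₂ * P₃)))) +
  (t ^ 2 / 12) • (P₁ * (P₂ * (P₂ * (P₂ * (P₃ * P₃))))) +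
  (t ^ 3 / 36) • (P₁ * (P₂ * (P₂ * (P₂ * (P₃ * (P₃ * P₃)))))) +
  ((1 : ℂ) / 4) • (P₁ * (P₁ * (P₃ * P₃))) +
  (t ^ 1 / 12) • (P₁ * (P₁ * (P₃ * (P₃ * P₃)))) +
  ((1 : ℂ) / 2) • (P₁ * (P₁ * (P₂ * P₃))) +
  (t ^ 1 / 4) • (P₁ * (P₁ * (P₂ * (P₃ * P₃)))) +
  (t ^ 2 / 12) • (P₁ * (P₁ * (P₂ * (P₃ * (P₃ * P₃))))) +
  ((1 : ℂ) / 4) • (P₁ * (P₁ * (P₂ * P₂))) +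
  (t ^ 1 / 4) • (P₁ * (P₁ * (P₂ * (P₂ * P₃)))) +
  (t ^ 2 / 8) • (P₁ * (P₁ * (P₂ * (P₂ * (P₃ * P₃))))) +
  (t ^ 3 / 24) • (P₁ * (P₁ * (P₂ * (P₂ * (P₃ * (P₃ * P₃)))))) +
  (t ^ 1 / 12) • (P₁ * (P₁ * (P₂ * (P₂ * P₂)))) +
  (t ^ 2 / 12) • (P₁ * (P₁ * (P₂ * (P₂ * (P₂ * P₃))))) +
  (t ^ 3 / 24) • (P₁ * (P₁ * (P₂ * (P₂ * (P₂ * (P₃ * P₃)))))) +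
  (t ^ 4 / 72) • (P₁ * (P₁ * (P₂ * (P₂ * (P₂ * (P₃ * (P₃ * P₃))))))) +
  ((1 : ℂ) / 6) • (P₁ * (P₁ * (P₁ * P₃))) +
  (t ^ 1 / 12) • (P₁ * (P₁ * (P₁ * (P₃ * P₃)))) +
  (t ^ 2 / 36) • (P₁ * (P₁ * (P₁ * (P₃ * (P₃ * P₃))))) +
  ((1 : ℂ) / 6) • (P₁ * (P₁ * (P₁ * P₂))) +
  (t ^ 1 / 6) • (P₁ * (P₁ * (P₁ * (P₂ * P₃)))) +
  (t ^ 2 / 12) • (P₁ * (P₁ * (P₁ * (P₂ * (P₃ * P₃))))) +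
  (t ^ 3 / 36) • (P₁ * (P₁ * (P₁ * (P₂ * (P₃ * (P₃ * P₃)))))) +
  (t ^ 1 / 12) • (P₁ * (P₁ * (P₁ * (P₂ * P₂)))) +
  (t ^ 2 / 12) • (P₁ * (P₁ * (P₁ * (P₂ * (P₂ * P₃))))) +
  (t ^ 3 / 24) • (P₁ * (P₁ * (P₁ * (P₂ * (P₂ * (P₃ * P₃)))))) +
  (t ^ 4 / 72) • (P₁ * (P₁ * (P₁ * (P₂ * (P₂ * (P₃ * (P₃ * P₃))))))) +
  (t ^ 2 / 36) • (P₁ * (P₁ * (P₁ * (P₂ * (P₂ * P₂))))) +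
  (t ^ 3 / 36) • (P₁ * (P₁ * (P₁ * (P₂ * (P₂ * (P₂ * P₃)))))) +
  (t ^ 4 / 72) • (P₁ * (P₁ * (P₁ * (P₂ * (P₂ * (P₂ * (P₃ * P₃))))))) +
  (t ^ 5 / 216) • (P₁ * (P₁ * (P₁ * (P₂ * (P₂ * (P₂ * (P₃ * (P₃ * P₃))))))))

lemma expTaylor4 (X : 𝒜) :
    (fun t : ℝ => exp ((t : ℂ) • X) - Qpoly X (t : ℂ)) =O[𝓝 (0 : ℝ)]
      fun t : ℝ => t ^ 4 := by
  rw [isBigO_iff]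
  refine ⟨Real.exp ‖X‖, ?_⟩
  have h1 : ∀ᶠ t : ℝ in 𝓝 0, |t| ≤ 1 := by
    have : Set.Icc (-1 : ℝ) 1 ∈ 𝓝 (0 : ℝ) := Icc_mem_nhds (by norm_num) (by norm_num)
    filter_upwards [this] with t ht
    exact abs_le.mpr ht
  filter_upwards [h1] with t ht
  set y : 𝒜 := (t : ℂ) • X with hy
  have hnt : ‖(t : ℂ)‖ = |t| := by
    rw [Complex.norm_real, Real.norm_eq_abs]
  have hny : ‖y‖ = |t| * ‖X‖ := by rw [hy, norm_smul, hnt]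
  have hsummable : Summable (fun n : ℕ => ((n ! : ℂ))⁻¹ • y ^ n) := expSeries_summable' y
  -- head of the series is the cubic Taylor polynomial
  have hhead : (∑ i ∈ Finset.range 4, ((i ! : ℂ))⁻¹ • y ^ i) = Qpoly X (t : ℂ) := by
    have h2 : ((t : ℂ) • X) ^ 2 = ((t : ℂ) * (t : ℂ)) • (X * X) := by
      rw [pow_two, smul_mul_smul_comm]
    have h3 : ((t : ℂ) • X) ^ 3 = ((t : ℂ) * ((t : ℂ) * (t : ℂ))) • (X * (X * X)) := by
      rw [pow_succ', h2, smul_mul_smul_comm]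
    rw [hy]
    simp only [Finset.sum_range_succ, Finset.sum_range_zero, zero_add, pow_zero, pow_one,
      h2, h3, smul_smul, Qpoly]
    match_scalars <;> simp [Nat.factorial] <;> ring
  have htotal : exp y = ∑' n : ℕ, ((n ! : ℂ))⁻¹ • y ^ n := by rw [exp_eq_tsum ℂ]
  have hsplit : exp y - Qpoly X (t : ℂ)
      = ∑' i : ℕ, ((((i + 4) : ℕ)! : ℂ))⁻¹ • y ^ (i + 4) := by
    have hadd := Summable.sum_add_tsum_nat_add (f := fun n : ℕ => ((n ! : ℂ))⁻¹ • y ^ n) 4 hsummable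
    rw [htotal, ← hadd, hhead]
    abel
  rw [hsplit]
  -- bound the tail
  have hXsum : Summable (fun n : ℕ => ‖X‖ ^ n / n !) := Real.summable_pow_div_factorial ‖X‖
  have hXsum4 : Summable (fun i : ℕ => ‖X‖ ^ (i + 4) / (i + 4)!) :=
    (summable_nat_add_iff 4).mpr hXsum
  have hg : Summable (fun i : ℕ => |t| ^ 4 * (‖X‖ ^ (i + 4) / (i + 4)!)) :=
    hXsum4.mul_left _
  have hterm : ∀ i : ℕ, ‖((((i + 4) : ℕ)! : ℂ))⁻¹ • y ^ (i + 4)‖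
      ≤ |t| ^ 4 * (‖X‖ ^ (i + 4) / (i + 4)!) := by
    intro i
    have h1 : ‖y ^ (i + 4)‖ ≤ ‖y‖ ^ (i + 4) := norm_pow_le' y (by omega)
    have h2 : ‖((((i + 4) : ℕ)! : ℂ))⁻¹‖ = ((((i + 4) : ℕ)! : ℝ))⁻¹ := by
      rw [norm_inv, Complex.norm_natCast]
    have h4 : |t| ^ (i + 4) ≤ |t| ^ 4 :=
      pow_le_pow_of_le_one (abs_nonneg t) ht (by omega)
    have h5 : (0 : ℝ) < (((i + 4) : ℕ)! : ℝ) := by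
      exact_mod_cast Nat.factorial_pos (i + 4)
    rw [norm_smul, h2]
    calc ((((i + 4) : ℕ)! : ℝ))⁻¹ * ‖y ^ (i + 4)‖
        ≤ ((((i + 4) : ℕ)! : ℝ))⁻¹ * ‖y‖ ^ (i + 4) :=
          mul_le_mul_of_nonneg_left h1 (by positivity)
      _ = ((((i + 4) : ℕ)! : ℝ))⁻¹ * (|t| ^ (i + 4) * ‖X‖ ^ (i + 4)) := by
          rw [hny, mul_pow]
      _ ≤ ((((i + 4) : ℕ)! : ℝ))⁻¹ * (|t| ^ 4 * ‖X‖ ^ (i + 4)) := by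
          refine mul_le_mul_of_nonneg_left ?_ (by positivity)
          exact mul_le_mul_of_nonneg_right h4 (by positivity)
      _ = |t| ^ 4 * (‖X‖ ^ (i + 4) / (i + 4)!) := by
          field_simp
  have hbound := tsum_of_norm_bounded hg.hasSum hterm
  have htail : (∑' i : ℕ, |t| ^ 4 * (‖X‖ ^ (i + 4) / (i + 4)!))
      = |t| ^ 4 * ∑' i : ℕ, ‖X‖ ^ (i + 4) / (i + 4)! := tsum_mul_left
  have htail2 : (∑' i : ℕ, ‖X‖ ^ (i + 4) / (i + 4)!) ≤ Real.exp ‖X‖ := by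
    have hsum := Summable.sum_add_tsum_nat_add (f := fun n : ℕ => ‖X‖ ^ n / n !) 4 hXsum
    have hexp : (∑' n : ℕ, ‖X‖ ^ n / n !) = Real.exp ‖X‖ := by
      rw [Real.exp_eq_exp_ℝ, exp_eq_tsum_div]
    have hhead0 : 0 ≤ ∑ i ∈ Finset.range 4, ‖X‖ ^ i / i ! := by positivity
    nlinarith [hsum, hexp]
  calc ‖∑' i : ℕ, ((((i + 4) : ℕ)! : ℂ))⁻¹ • y ^ (i + 4)‖
      ≤ ∑' i : ℕ, |t| ^ 4 * (‖X‖ ^ (i + 4) / (i + 4)!) := hbound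
    _ = |t| ^ 4 * ∑' i : ℕ, ‖X‖ ^ (i + 4) / (i + 4)! := htail
    _ ≤ |t| ^ 4 * Real.exp ‖X‖ := by
        exact mul_le_mul_of_nonneg_left htail2 (by positivity)
    _ = Real.exp ‖X‖ * ‖t ^ 4‖ := by
        rw [Real.norm_eq_abs, abs_pow]; ring

lemma Qpoly_identity (P₁ P₂ P₃ : 𝒜)
    (hcond : ringComm P₁ P₂ + ringComm P₁ P₃ + ringComm P₂ P₃ = 0) (t : ℂ) :
    Qpoly P₁ t * Qpoly P₂ t * Qpoly P₃ t - Qpoly (P₁ + P₂ + P₃) t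
      - (t ^ 3 / 6) • (ringComm P₁ (ringComm P₂ P₃) + ringComm P₂ (ringComm P₂ P₃))
      = t ^ 4 • Wpoly P₁ P₂ P₃ t := by
  have hD : (P₁ * P₂ - P₂ * P₁) + (P₁ * P₃ - P₃ * P₁) + (P₂ * P₃ - P₃ * P₂) = 0 := by
    simpa [ringComm] using hcond
  have hkey : Qpoly P₁ t * Qpoly P₂ t * Qpoly P₃ t - Qpoly (P₁ + P₂ + P₃) t
      - (t ^ 3 / 6) • (ringComm P₁ (ringComm P₂ P₃) + ringComm P₂ (ringComm P₂ P₃))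
      - t ^ 4 • Wpoly P₁ P₂ P₃ t
      = (t ^ 2 / 2) • ((P₁ * P₂ - P₂ * P₁) + (P₁ * P₃ - P₃ * P₁) + (P₂ * P₃ - P₃ * P₂))
        + (t ^ 3 / 3) • (P₁ * ((P₁ * P₂ - P₂ * P₁) + (P₁ * P₃ - P₃ * P₁) + (P₂ * P₃ - P₃ * P₂)))
        + (t ^ 3 / 6) • (P₂ * ((P₁ * P₂ - P₂ * P₁) + (P₁ * P₃ - P₃ * P₁) + (P₂ * P₃ - P₃ * P₂)))
        + (t ^ 3 / 6) • (P₃ * ((P₁ * P₂ - P₂ * P₁) + (P₁ * P₃ - P₃ * P₁) + (P₂ * P₃ - P₃ * P₂)))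
        + (t ^ 3 / 6) • (((P₁ * P₂ - P₂ * P₁) + (P₁ * P₃ - P₃ * P₁) + (P₂ * P₃ - P₃ * P₂)) * P₁)
        + (t ^ 3 / 3) • (((P₁ * P₂ - P₂ * P₁) + (P₁ * P₃ - P₃ * P₁) + (P₂ * P₃ - P₃ * P₂)) * P₂)
        + (t ^ 3 / 3) • (((P₁ * P₂ - P₂ * P₁) + (P₁ * P₃ - P₃ * P₁) + (P₂ * P₃ - P₃ * P₂)) * P₃) := by
    simp only [Qpoly, Wpoly, ringComm]
    simp only [mul_add, add_mul, sub_mul, mul_sub, smul_mul_assoc, mul_smul_comm,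
      smul_smul, smul_add, smul_sub, mul_one, one_mul, mul_assoc]
    match_scalars <;> ring
  rw [hD] at hkey
  simp only [mul_zero, zero_mul, smul_zero, add_zero] at hkey
  exact sub_eq_zero.mp hkey

end Aux

/-- For `P₁, P₂, P₃` in a complex Banach algebra with `𝓛 = P₁ + P₂ + P₃` and
`[P₁,P₂] + [P₁,P₃] + [P₂,P₃] = 0`, one has
`exp(tP₁)exp(tP₂)exp(tP₃) − exp(t𝓛) − (t³/6)([P₁,[P₂,P₃]] + [P₂,[P₂,P₃]]) = O(t⁴)`. -/
theorem splitting_three_leading_error {𝒜 : Type*} [NormedRing 𝒜] [NormedAlgebra ℂ 𝒜]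
    [CompleteSpace 𝒜] (P₁ P₂ P₃ : 𝒜) (𝓛 : 𝒜) (h𝓛 : 𝓛 = P₁ + P₂ + P₃)
    (hcond : ringComm P₁ P₂ + ringComm P₁ P₃ + ringComm P₂ P₃ = 0) :
    (fun t : ℝ => exp ((t : ℂ) • P₁) * exp ((t : ℂ) • P₂) * exp ((t : ℂ) • P₃)
        - exp ((t : ℂ) • 𝓛)
        - ((t : ℂ) ^ 3 / 6) • (ringComm P₁ (ringComm P₂ P₃) + ringComm P₂ (ringComm P₂ P₃)))
      =O[𝓝 (0 : ℝ)] fun t : ℝ => t ^ 4 := by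
  subst h𝓛
  set C : 𝒜 := ringComm P₁ (ringComm P₂ P₃) + ringComm P₂ (ringComm P₂ P₃) with hC
  -- continuity facts giving O(1) bounds
  have hcsmul : ∀ X : 𝒜, Continuous fun t : ℝ => (t : ℂ) • X := fun X =>
    (Complex.continuous_ofReal).smul continuous_const
  have hexpO : ∀ X : 𝒜, (fun t : ℝ => exp ((t : ℂ) • X)) =O[𝓝 (0 : ℝ)]
      (fun _ : ℝ => (1 : ℝ)) := fun X =>
    (((continuous_iff_continuousAt.2 fun x => (exp_analytic (𝕂 := ℂ) x).continuousAt).comp (hcsmul X)).tendsto 0).isBigO_one ℝ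
  have hQcont : ∀ X : 𝒜, Continuous fun t : ℝ => Qpoly X (t : ℂ) := by
    intro X
    unfold Qpoly
    fun_prop
  have hQO : ∀ X : 𝒜, (fun t : ℝ => Qpoly X (t : ℂ)) =O[𝓝 (0 : ℝ)]
      (fun _ : ℝ => (1 : ℝ)) := fun X => ((hQcont X).tendsto 0).isBigO_one ℝ
  have hWcont : Continuous fun t : ℝ => Wpoly P₁ P₂ P₃ (t : ℂ) := by
    unfold Wpoly
    fun_prop
  have hWO : (fun t : ℝ => Wpoly P₁ P₂ P₃ (t : ℂ)) =O[𝓝 (0 : ℝ)]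
      (fun _ : ℝ => (1 : ℝ)) := (hWcont.tendsto 0).isBigO_one ℝ
  have hpow : (fun t : ℝ => ((t : ℂ)) ^ 4) =O[𝓝 (0 : ℝ)] fun t : ℝ => t ^ 4 := by
    apply isBigO_of_le
    intro t
    simp [Complex.norm_real]
  -- the five pieces
  have T1 : (fun t : ℝ => (exp ((t : ℂ) • P₁) - Qpoly P₁ (t : ℂ))
      * (exp ((t : ℂ) • P₂) * exp ((t : ℂ) • P₃))) =O[𝓝 (0 : ℝ)]
      (fun t : ℝ => t ^ 4) := by
    simpa using (expTaylor4 P₁).mul ((hexpO P₂).mul (hexpO P₃))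
  have T2 : (fun t : ℝ => Qpoly P₁ (t : ℂ)
      * ((exp ((t : ℂ) • P₂) - Qpoly P₂ (t : ℂ)) * exp ((t : ℂ) • P₃)))
      =O[𝓝 (0 : ℝ)] (fun t : ℝ => t ^ 4) := by
    simpa using (hQO P₁).mul ((expTaylor4 P₂).mul (hexpO P₃))
  have T3 : (fun t : ℝ => (Qpoly P₁ (t : ℂ) * Qpoly P₂ (t : ℂ))
      * (exp ((t : ℂ) • P₃) - Qpoly P₃ (t : ℂ))) =O[𝓝 (0 : ℝ)]
      (fun t : ℝ => t ^ 4) := by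
    simpa using ((hQO P₁).mul (hQO P₂)).mul (expTaylor4 P₃)
  have T4 : (fun t : ℝ => exp ((t : ℂ) • (P₁ + P₂ + P₃))
      - Qpoly (P₁ + P₂ + P₃) (t : ℂ)) =O[𝓝 (0 : ℝ)] (fun t : ℝ => t ^ 4) :=
    expTaylor4 (P₁ + P₂ + P₃)
  have T5 : (fun t : ℝ => ((t : ℂ)) ^ 4 • Wpoly P₁ P₂ P₃ (t : ℂ)) =O[𝓝 (0 : ℝ)]
      (fun t : ℝ => t ^ 4) := by
    simpa using hpow.smul hWO
  have Tsum := (((T1.add T2).add T3).sub T4).add T5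
  refine Tsum.congr' ?_ (EventuallyEq.refl _ _)
  filter_upwards with t
  have hid := Qpoly_identity P₁ P₂ P₃ hcond (t : ℂ)
  rw [← hC] at hid
  have hpoly : Qpoly P₁ (t : ℂ) * Qpoly P₂ (t : ℂ) * Qpoly P₃ (t : ℂ)
      = Qpoly (P₁ + P₂ + P₃) (t : ℂ) + ((t : ℂ) ^ 3 / 6) • C
        + ((t : ℂ)) ^ 4 • Wpoly P₁ P₂ P₃ (t : ℂ) := by
    have := hid
    linear_combination (norm := abel) this
  calc (exp ((t : ℂ) • P₁) - Qpoly P₁ (t : ℂ))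
        * (exp ((t : ℂ) • P₂) * exp ((t : ℂ) • P₃))
      + Qpoly P₁ (t : ℂ) * ((exp ((t : ℂ) • P₂) - Qpoly P₂ (t : ℂ)) * exp ((t : ℂ) • P₃))
      + (Qpoly P₁ (t : ℂ) * Qpoly P₂ (t : ℂ)) * (exp ((t : ℂ) • P₃) - Qpoly P₃ (t : ℂ))
      - (exp ((t : ℂ) • (P₁ + P₂ + P₃)) - Qpoly (P₁ + P₂ + P₃) (t : ℂ))
      + ((t : ℂ)) ^ 4 • Wpoly P₁ P₂ P₃ (t : ℂ)
      = exp ((t : ℂ) • P₁) * exp ((t : ℂ) • P₂) * exp ((t : ℂ) • P₃)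
        - exp ((t : ℂ) • (P₁ + P₂ + P₃))
        - (Qpoly P₁ (t : ℂ) * Qpoly P₂ (t : ℂ) * Qpoly P₃ (t : ℂ)
            - Qpoly (P₁ + P₂ + P₃) (t : ℂ) - ((t : ℂ)) ^ 4 • Wpoly P₁ P₂ P₃ (t : ℂ)) := by
        noncomm_ring
    _ = exp ((t : ℂ) • P₁) * exp ((t : ℂ) • P₂) * exp ((t : ℂ) • P₃)
        - exp ((t : ℂ) • (P₁ + P₂ + P₃)) - ((t : ℂ) ^ 3 / 6) • C := by
        rw [hpoly]; abel
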